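/- arXiv:2208.04927 — 4 statements merged into one kernel-verified Lean document; each statement's English description precedes it below -/
import Mathlib

section
/- Let Q ≥ 1 and w ≥ 1 be natural numbers, let the hash function h be drawn uniformly at random from the finite set of all functions Fin Q → Fin w, fix an index i ∈ Fin Q, let g : Fin Q → ℝ be nonnegative weights with G_S := ∑_{k} g(k) > 0, and define the collision noise N(h) = ∑_{k ≠ i} g(k) · 1[h(k) = h(i)]. Then for every real c > 0, the probability (over the uniform choice of h) that N ≥ c · G_S / w is at most 1/c. -/
open Finset
open scoped Classical

/-- Markov tail bound for the collision noise: with `h` drawn uniformly from all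
functions `Fin Q → Fin w`, the probability that
`N h = ∑_{k ≠ i} g k · 1[h k = h i]` is at least `c · G_S / w`, where
`G_S = ∑ k, g k > 0`, is at most `1 / c`. -/
theorem hydra_noise_markov (Q w : ℕ) (hQ : 1 ≤ Q) (hw : 1 ≤ w)
    (i : Fin Q) (g : Fin Q → ℝ) (hg : ∀ k, 0 ≤ g k)
    (hGS : 0 < ∑ k, g k) (c : ℝ) (hc : 0 < c) :
    ((Finset.univ.filter fun h : Fin Q → Fin w =>
          c * (∑ k, g k) / w ≤
            ∑ k ∈ Finset.univ.erase i, g k * (if h k = h i then (1 : ℝ) else 0)).card : ℝ) /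
        (Fintype.card (Fin Q → Fin w) : ℝ)
      ≤ 1 / c := by
  classical
  have hwpos : (0:ℝ) < w := by exact_mod_cast hw
  set G := ∑ k, g k with hG
  set N : (Fin Q → Fin w) → ℝ :=
    fun h => ∑ k ∈ Finset.univ.erase i, g k * (if h k = h i then (1:ℝ) else 0) with hN
  have hNnonneg : ∀ h, 0 ≤ N h := fun h =>
    Finset.sum_nonneg fun k _ => mul_nonneg (hg k) (by split <;> norm_num)
  -- counting lemma
  have hcount : ∀ k : Fin Q, k ≠ i →
      (∑ h : Fin Q → Fin w, (if h k = h i then (1:ℝ) else 0)) = (w:ℝ)^Q / w := by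
    intro k hk
    have hik : i ≠ k := hk.symm
    set e := Equiv.piSplitAt k (fun _ : Fin Q => Fin w) with he
    have h1 : (∑ h : Fin Q → Fin w, (if h k = h i then (1:ℝ) else 0))
        = ∑ p : Fin w × ({j : Fin Q // j ≠ k} → Fin w),
            (if p.1 = p.2 ⟨i, hik⟩ then (1:ℝ) else 0) := by
      rw [← e.symm.sum_comp]
      refine Finset.sum_congr rfl fun p _ => ?_
      have hk' : e.symm p k = p.1 := by
        simp [he, Equiv.piSplitAt_symm_apply]
      have hi' : e.symm p i = p.2 ⟨i, hik⟩ := by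
        simp [he, Equiv.piSplitAt_symm_apply, hik]
      rw [hk', hi']
    have h2 : (∑ p : Fin w × ({j : Fin Q // j ≠ k} → Fin w),
            (if p.1 = p.2 ⟨i, hik⟩ then (1:ℝ) else 0))
        = (Fintype.card ({j : Fin Q // j ≠ k} → Fin w) : ℝ) := by
      rw [Fintype.sum_prod_type_right]
      have : ∀ r : {j : Fin Q // j ≠ k} → Fin w,
          (∑ x : Fin w, (if x = r ⟨i, hik⟩ then (1:ℝ) else 0)) = 1 := by
        intro r
        simp [Finset.sum_ite_eq]
      rw [Finset.sum_congr rfl fun r _ => this r]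
      simp [Finset.card_univ]
    have hcardeq : (w:ℝ)^Q = w * (Fintype.card ({j : Fin Q // j ≠ k} → Fin w) : ℝ) := by
      have := Fintype.card_congr e
      rw [Fintype.card_fun, Fintype.card_prod] at this
      simp only [Fintype.card_fin] at this
      exact_mod_cast this
    rw [h1, h2]
    rw [hcardeq]
    field_simp
  -- the tail event
  set S := Finset.univ.filter (fun h : Fin Q → Fin w => c * G / w ≤ N h) with hS
  have hmarkov : (S.card : ℝ) * (c * G / w) ≤ ∑ h : Fin Q → Fin w, N h := by
    calc (S.card : ℝ) * (c*G/w) = ∑ _h ∈ S, c*G/w := by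
          rw [Finset.sum_const, nsmul_eq_mul]
      _ ≤ ∑ h ∈ S, N h :=
          Finset.sum_le_sum fun h hh => (Finset.mem_filter.mp hh).2
      _ ≤ ∑ h, N h :=
          Finset.sum_le_sum_of_subset_of_nonneg (Finset.subset_univ S)
            (fun h _ _ => hNnonneg h)
  have hsum : ∑ h : Fin Q → Fin w, N h ≤ G * ((w:ℝ)^Q / w) := by
    simp only [hN]
    rw [Finset.sum_comm]
    have hinner : ∀ k ∈ Finset.univ.erase i,
        (∑ h : Fin Q → Fin w, g k * (if h k = h i then (1:ℝ) else 0))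
          = g k * ((w:ℝ)^Q/w) := by
      intro k hk
      rw [← Finset.mul_sum, hcount k (Finset.ne_of_mem_erase hk)]
    rw [Finset.sum_congr rfl hinner, ← Finset.sum_mul]
    apply mul_le_mul_of_nonneg_right
    · exact Finset.sum_le_sum_of_subset_of_nonneg (Finset.erase_subset _ _)
        (fun k _ _ => hg k)
    · positivity
  have ht : 0 < c * G / w := by positivity
  have hcard : (S.card : ℝ) ≤ (w:ℝ)^Q / c := by
    have h3 := hmarkov.trans hsum
    rw [← le_div_iff₀ ht] at h3
    have : G * ((w:ℝ)^Q/w) / (c*G/w) = (w:ℝ)^Q/c := by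
      field_simp
    rwa [this] at h3
  have hcardF : (Fintype.card (Fin Q → Fin w) : ℝ) = (w:ℝ)^Q := by
    rw [Fintype.card_fun]
    simp
  rw [hcardF]
  rw [div_le_div_iff₀ (by positivity) hc]
  have h5 : (S.card : ℝ) * c ≤ ((w:ℝ)^Q / c) * c :=
    mul_le_mul_of_nonneg_right hcard hc.le
  have h6 : ((w:ℝ)^Q/c)*c = (w:ℝ)^Q := by field_simp
  rw [one_mul]
  linarith
end

section
/- Let (Ω, μ) be a probability space, let ε_US ∈ (0,1), ε > 0, δ_US ≥ 0, c > 0 be reals, let G_i ≥ 0 and G_S > 0 be reals, and set w = c(1 + ε_US)/ε. Let N : Ω → ℝ be an integrable random variable with N ≥ 0 almost everywhere and E[N] ≤ G_S / w, and let X : Ω → ℝ be a random variable with μ{ω : (G_i + N(ω))(1 − ε_US) ≤ X(ω) ≤ (G_i + N(ω))(1 + ε_US)} ≥ 1 − δ_US. Then μ{ω : G_i(1 − ε_US) ≤ X(ω) ≤ G_i(1 + ε_US) + ε · G_S} ≥ 1 − δ_US − 1/c. -/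
open MeasureTheory

/-- Single-row guarantee in the proof of Hydra's Theorem 2: with row width
`w = c(1 + ε_US)/ε`, nonnegative integrable collision noise `N` with
`E[N] ≤ G_S / w`, and an estimate `X` satisfying the `(1 ± ε_US)`-multiplicative
guarantee on `G_i + N` with probability at least `1 − δ_US`, the event
`G_i(1 − ε_US) ≤ X ≤ G_i(1 + ε_US) + ε·G_S` has probability at least
`1 − δ_US − 1/c`. -/
theorem hydra_single_row {Ω : Type*} [MeasurableSpace Ω] (μ : Measure Ω)
    [IsProbabilityMeasure μ]
    (ε_US ε δ_US c G_i G_S w : ℝ)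
    (hε_US : ε_US ∈ Set.Ioo (0 : ℝ) 1) (hε : 0 < ε) (hδ_US : 0 ≤ δ_US) (hc : 0 < c)
    (hGi : 0 ≤ G_i) (hGS : 0 < G_S) (hw : w = c * (1 + ε_US) / ε)
    (N X : Ω → ℝ) (hNm : Measurable N) (hXm : Measurable X)
    (hNint : Integrable N μ) (hNnonneg : ∀ᵐ ω ∂μ, 0 ≤ N ω)
    (hNexp : ∫ ω, N ω ∂μ ≤ G_S / w)
    (hX : ENNReal.ofReal (1 - δ_US) ≤
      μ {ω | (G_i + N ω) * (1 - ε_US) ≤ X ω ∧ X ω ≤ (G_i + N ω) * (1 + ε_US)}) :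
    ENNReal.ofReal (1 - δ_US - 1 / c) ≤
      μ {ω | G_i * (1 - ε_US) ≤ X ω ∧ X ω ≤ G_i * (1 + ε_US) + ε * G_S} := by
  obtain ⟨hε1, hε2⟩ := hε_US
  have hwpos : 0 < w := by
    rw [hw]; positivity
  set t : ℝ := c * G_S / w with ht
  have htpos : 0 < t := by positivity
  -- Markov bound on the bad event Bc = {t ≤ N}
  have hmarkov : μ {ω | t ≤ N ω} ≤ ENNReal.ofReal (1 / c) := by
    have h1 : t * (μ {ω | t ≤ N ω}).toReal ≤ ∫ ω, N ω ∂μ :=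
      mul_meas_ge_le_integral_of_nonneg hNnonneg hNint t
    have h2 : (μ {ω | t ≤ N ω}).toReal ≤ 1 / c := by
      have := le_trans h1 hNexp
      rw [ht] at this
      have hdiv : (μ {ω | t ≤ N ω}).toReal ≤ (G_S / w) / (c * G_S / w) :=
        (le_div_iff₀' (by positivity)).2 this
      calc (μ {ω | t ≤ N ω}).toReal ≤ (G_S / w) / (c * G_S / w) := hdiv
        _ = 1 / c := by field_simp
    calc μ {ω | t ≤ N ω} = ENNReal.ofReal ((μ {ω | t ≤ N ω}).toReal) := by
          rw [ENNReal.ofReal_toReal (measure_ne_top μ _)]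
      _ ≤ ENNReal.ofReal (1 / c) := ENNReal.ofReal_le_ofReal h2
  set A := {ω | (G_i + N ω) * (1 - ε_US) ≤ X ω ∧ X ω ≤ (G_i + N ω) * (1 + ε_US)}
  set T := {ω | G_i * (1 - ε_US) ≤ X ω ∧ X ω ≤ G_i * (1 + ε_US) + ε * G_S}
  set E := {ω | 0 ≤ N ω}
  have htε : t * (1 + ε_US) = ε * G_S := by
    rw [ht, hw]; field_simp
  have hsub : A ⊆ T ∪ {ω | t ≤ N ω} ∪ Eᶜ := by
    intro ω hωA
    by_cases hE : 0 ≤ N ω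
    · by_cases hB : t ≤ N ω
      · exact Or.inl (Or.inr hB)
      · push_neg at hB
        refine Or.inl (Or.inl ⟨?_, ?_⟩)
        · calc G_i * (1 - ε_US) ≤ (G_i + N ω) * (1 - ε_US) := by nlinarith
            _ ≤ X ω := hωA.1
        · calc X ω ≤ (G_i + N ω) * (1 + ε_US) := hωA.2
            _ = G_i * (1 + ε_US) + N ω * (1 + ε_US) := by ring
            _ ≤ G_i * (1 + ε_US) + t * (1 + ε_US) := by nlinarith
            _ = G_i * (1 + ε_US) + ε * G_S := by rw [htε]
    · exact Or.inr hE
  have hEc : μ Eᶜ = 0 := by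
    have := ae_iff.1 hNnonneg
    simpa [E, Set.compl_setOf] using this
  have hchain : ENNReal.ofReal (1 - δ_US) ≤ μ T + ENNReal.ofReal (1 / c) := by
    calc ENNReal.ofReal (1 - δ_US) ≤ μ A := hX
      _ ≤ μ (T ∪ {ω | t ≤ N ω} ∪ Eᶜ) := measure_mono hsub
      _ ≤ μ (T ∪ {ω | t ≤ N ω}) + μ Eᶜ := measure_union_le _ _
      _ = μ (T ∪ {ω | t ≤ N ω}) := by rw [hEc, add_zero]
      _ ≤ μ T + μ {ω | t ≤ N ω} := measure_union_le _ _
      _ ≤ μ T + ENNReal.ofReal (1 / c) := add_le_add_right hmarkov _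
  have : ENNReal.ofReal (1 - δ_US) - ENNReal.ofReal (1 / c) ≤ μ T :=
    tsub_le_iff_right.2 hchain
  calc ENNReal.ofReal (1 - δ_US - 1 / c)
      = ENNReal.ofReal (1 - δ_US) - ENNReal.ofReal (1 / c) := by
        rw [← ENNReal.ofReal_sub _ (by positivity)]
    _ ≤ μ T := this
end

section
/- Let (Ω, μ) be a probability space, let r ≥ 1, let ε_US ∈ (0,1), ε > 0, δ_US ≥ 0, c > 0 be reals with p := 1 − δ_US − 1/c > 1/2, let G_i ≥ 0 and G_S > 0 be reals, and set w = c(1 + ε_US)/ε. For each j ∈ {1,…,r} let N_j, X_j : Ω → ℝ be random variables such that: (i) the pairs (N_1, X_1), …, (N_r, X_r) are mutually independent; (ii) N_j ≥ 0 almost everywhere and N_j is integrable with E[N_j] ≤ G_S / w; and (iii) μ{ω : (G_i + N_j(ω))(1 − ε_US) ≤ X_j(ω) ≤ (G_i + N_j(ω))(1 + ε_US)} ≥ 1 − δ_US. Let Ĝ_i(ω) be the median of (X_1(ω), …, X_r(ω)), defined as the value at index ⌊r/2⌋ (0-indexed) of the non-decreasing rearrangement. Then μ{ω : G_i(1 −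 ε_US) ≤ Ĝ_i(ω) ≤ G_i(1 + ε_US) + ε · G_S} ≥ 1 − exp(−2 r (p − 1/2)²). -/
open MeasureTheory ProbabilityTheory Real

lemma hoeffG (s : ℝ) (hs : 0 ≤ s) :
    ((1/2 - s) * exp (2*s) + (1/2 + s) * exp (-(2*s))) * exp (2*s^2) ≤ 1 := by
  set G : ℝ → ℝ := fun s => ((1/2 - s) * exp (2*s) + (1/2 + s) * exp (-(2*s))) * exp (2*s^2)
    with hG
  have hderiv : ∀ u : ℝ, HasDerivAt G ((4*u^2) * (exp (-(2*u)) - exp (2*u)) * exp (2*u^2)) u := by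
    intro u
    have h1 : HasDerivAt (fun v : ℝ => (1/2 - v) * exp (2*v) + (1/2 + v) * exp (-(2*v)))
        (-(2*u) * exp (2*u) + -(2*u) * exp (-(2*u))) u := by
      have e1 : HasDerivAt (fun v : ℝ => exp (2*v)) (2 * exp (2*u)) u := by
        simpa [mul_comm] using (HasDerivAt.exp ((hasDerivAt_id u).const_mul 2))
      have e2 : HasDerivAt (fun v : ℝ => exp (-(2*v))) (-2 * exp (-(2*u))) u := by
        simpa [mul_comm] using (HasDerivAt.exp (((hasDerivAt_id u).const_mul 2).neg))
      have t1 := ((hasDerivAt_const u (1/2:ℝ)).sub (hasDerivAt_id u)).mul e1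
      have t2 := ((hasDerivAt_const u (1/2:ℝ)).add (hasDerivAt_id u)).mul e2
      have h := t1.add t2
      refine h.congr_deriv ?_
      simp only [id, Pi.sub_apply, Pi.add_apply]
      ring
    have h2 : HasDerivAt (fun v : ℝ => exp (2*v^2)) ((4*u) * exp (2*u^2)) u := by
      have h : HasDerivAt (fun v : ℝ => 2*v^2) (4*u) u := by
        have := (hasDerivAt_pow 2 u).const_mul (2:ℝ)
        refine this.congr_deriv ?_
        norm_num
        ring
      have := h.exp
      convert this using 1
      ring
    have := h1.mul h2
    refine this.congr_deriv ?_
    ring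
  have hanti : AntitoneOn G (Set.Ici (0:ℝ)) := by
    apply antitoneOn_of_deriv_nonpos (convex_Ici 0)
    · exact Continuous.continuousOn (by
        fun_prop)
    · intro u hu
      exact (hderiv u).differentiableAt.differentiableWithinAt
    · intro u hu
      rw [(hderiv u).deriv]
      have hu0 : 0 < u := by simpa using hu
      have : exp (-(2*u)) - exp (2*u) ≤ 0 := by
        have : exp (-(2*u)) ≤ exp (2*u) := exp_le_exp.mpr (by nlinarith)
        linarith
      have h4 : 0 ≤ 4*u^2 := by positivity
      nlinarith [exp_pos (2*u^2), mul_nonneg h4 (neg_nonneg.mpr this)]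
  have h0 : G 0 = 1 := by norm_num [hG]
  rcases eq_or_lt_of_le hs with h | h
  · rw [show ((1/2 - s) * exp (2*s) + (1/2 + s) * exp (-(2*s))) * exp (2*s^2) = G s from rfl, ← h, h0]
  · have := hanti (Set.self_mem_Ici) (Set.mem_Ici.mpr hs) hs
    rw [h0] at this
    exact this


/-- The median of `x : Fin r → ℝ` (for `r ≥ 1`): the value at index `⌊r/2⌋`
(0-indexed) of the non-decreasing rearrangement of `x`. -/
noncomputable def sortedMedian {r : ℕ} (hr : 0 < r) (x : Fin r → ℝ) : ℝ :=
  x (Tuple.sort x ⟨r / 2, Nat.div_lt_self hr one_lt_two⟩)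

lemma median_bounds {r : ℕ} (hr : 0 < r) (x : Fin r → ℝ) (a b : ℝ)
    (A : Finset (Fin r)) (hcard : r < 2 * A.card)
    (hA : ∀ j ∈ A, a ≤ x j ∧ x j ≤ b) :
    a ≤ sortedMedian hr x ∧ sortedMedian hr x ≤ b := by
  set σ := Tuple.sort x with hσ
  set m : Fin r := ⟨r / 2, Nat.div_lt_self hr one_lt_two⟩ with hm
  have mono := Tuple.monotone_sort x
  set B : Finset (Fin r) := A.image σ.symm with hB
  have hcardB : B.card = A.card := Finset.card_image_of_injective _ σ.symm.injective
  have hmemB : ∀ i ∈ B, a ≤ x (σ i) ∧ x (σ i) ≤ b := by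
    intro i hi
    obtain ⟨j, hj, rfl⟩ := Finset.mem_image.mp hi
    simpa using hA j hj
  constructor
  · by_contra h
    push_neg at h
    have hsub : B ⊆ Finset.Ioi m := by
      intro i hi
      by_contra hgt
      simp only [Finset.mem_Ioi, not_lt] at hgt
      exact absurd ((mono hgt).trans_lt h) (not_lt.mpr (hmemB i hi).1)
    have := Finset.card_le_card hsub
    rw [hcardB, Fin.card_Ioi] at this
    simp only [hm] at this
    omega
  · by_contra h
    push_neg at h
    have hsub : B ⊆ Finset.Iio m := by
      intro i hi
      by_contra hgt
      simp only [Finset.mem_Iio, not_lt] at hgt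
      exact absurd (h.trans_le (mono hgt)) (not_lt.mpr (hmemB i hi).2)
    have := Finset.card_le_card hsub
    rw [hcardB, Fin.card_Iio] at this
    simp only [hm] at this
    omega


set_option maxHeartbeats 2000000 in
/-- Hydra's Theorem 2 (accuracy guarantee of the Hydra-sketch): with `r` rows of
width `w = c(1 + ε_US)/ε`, mutually independent per-row pairs `(N_j, X_j)` of
collision noise and universal-sketch estimate, `N_j ≥ 0` a.e. with
`E[N_j] ≤ G_S / w`, and each `X_j` approximating `G_i + N_j` within a
`(1 ± ε_US)` factor with probability at least `1 − δ_US`, the median `Ĝ_i` of the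
per-row estimates satisfies `G_i(1 − ε_US) ≤ Ĝ_i ≤ G_i(1 + ε_US) + ε·G_S` with
probability at least `1 − exp(−2 r (p − 1/2)²)` where `p = 1 − δ_US − 1/c`. -/
theorem hydra_theorem2 {Ω : Type*} [MeasurableSpace Ω] (μ : Measure Ω)
    [IsProbabilityMeasure μ]
    (r : ℕ) (hr : 0 < r)
    (ε_US ε δ_US c p G_i G_S w : ℝ)
    (hε_US : ε_US ∈ Set.Ioo (0 : ℝ) 1) (hε : 0 < ε) (hδ_US : 0 ≤ δ_US) (hc : 0 < c)
    (hp : p = 1 - δ_US - 1 / c) (hp2 : 1 / 2 < p)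
    (hGi : 0 ≤ G_i) (hGS : 0 < G_S) (hw : w = c * (1 + ε_US) / ε)
    (N X : Fin r → Ω → ℝ)
    (hNm : ∀ j, Measurable (N j)) (hXm : ∀ j, Measurable (X j))
    (hindep : iIndepFun
      (fun j ω => (N j ω, X j ω)) μ)
    (hNnonneg : ∀ j, ∀ᵐ ω ∂μ, 0 ≤ N j ω)
    (hNint : ∀ j, Integrable (N j) μ)
    (hNexp : ∀ j, ∫ ω, N j ω ∂μ ≤ G_S / w)
    (hX : ∀ j, ENNReal.ofReal (1 - δ_US) ≤
      μ {ω | (G_i + N j ω) * (1 - ε_US) ≤ X j ω ∧ X j ω ≤ (G_i + N j ω) * (1 + ε_US)}) :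
    ENNReal.ofReal (1 - Real.exp (-2 * r * (p - 1 / 2) ^ 2)) ≤
      μ {ω | G_i * (1 - ε_US) ≤ sortedMedian hr (fun j => X j ω) ∧
             sortedMedian hr (fun j => X j ω) ≤ G_i * (1 + ε_US) + ε * G_S} := by
  classical
  obtain ⟨hε1, hε2⟩ := hε_US
  -- basic real facts
  have hw0 : 0 < w := by
    rw [hw]; exact div_pos (mul_pos hc (by linarith)) hε
  set K : ℝ := c * G_S / w with hK
  have hK0 : 0 < K := div_pos (mul_pos hc hGS) hw0
  have hKc : G_S / w = K / c := by
    rw [hK]; field_simp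
  have hKε : K * (1 + ε_US) = ε * G_S := by
    rw [hK, hw]; field_simp
  have hs0 : 0 < p - 1/2 := by linarith
  set s : ℝ := p - 1/2 with hsdef
  set t : ℝ := -(4*s) with htdef
  have ht0 : t ≤ 0 := by rw [htdef]; linarith
  have hp1 : p < 1 := by
    have h1c : 0 < 1/c := by positivity
    rw [hp]; linarith
  have hpe : p = 1/2 + s := by rw [hsdef]; ring
  -- the good event
  set T : Set (ℝ × ℝ) :=
    ({q : ℝ × ℝ | (G_i + q.1) * (1 - ε_US) ≤ q.2} ∩
      {q : ℝ × ℝ | q.2 ≤ (G_i + q.1) * (1 + ε_US)}) ∩ {q : ℝ × ℝ | q.1 < K} with hT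
  have hTm : MeasurableSet T := by
    refine MeasurableSet.inter (MeasurableSet.inter ?_ ?_) ?_
    · exact measurableSet_le ((measurable_const.add measurable_fst).mul_const _) measurable_snd
    · exact measurableSet_le measurable_snd ((measurable_const.add measurable_fst).mul_const _)
    · exact measurableSet_lt measurable_fst measurable_const
  set A : Fin r → Set Ω := fun j => (fun ω => (N j ω, X j ω)) ⁻¹' T with hA
  have hAm : ∀ j, MeasurableSet (A j) := fun j => ((hNm j).prodMk (hXm j)) hTm
  have hAmem : ∀ j ω, ω ∈ A j ↔
      ((G_i + N j ω) * (1 - ε_US) ≤ X j ω ∧ X j ω ≤ (G_i + N j ω) * (1 + ε_US)) ∧ N j ω < K := by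
    intro j ω
    simp only [hA, Set.mem_preimage, hT, Set.mem_inter_iff, Set.mem_setOf_eq]
  -- indicator variables
  set Y : Fin r → Ω → ℝ := fun j ω => (A j).indicator (fun _ => (1:ℝ)) ω with hY
  have hYm : ∀ j, Measurable (Y j) := fun j => (measurable_const.indicator (hAm j))
  have hYindep : iIndepFun Y μ := by
    have hYeq : Y = fun j => (T.indicator (fun _ => (1:ℝ))) ∘ (fun ω => (N j ω, X j ω)) := by
      funext j ω
      simp only [hY, Function.comp_apply, Set.indicator_apply, hA, Set.mem_preimage]
    rw [hYeq]
    exact hindep.comp _ (fun _ => measurable_const.indicator hTm)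
  -- measure of good event
  have hμA : ∀ j, ENNReal.ofReal p ≤ μ (A j) := by
    intro j
    have hmarkov : (μ {ω | K ≤ N j ω}).toReal ≤ 1 / c := by
      have h := mul_meas_ge_le_integral_of_nonneg (hNnonneg j) (hNint j) K
      have h2 : K * (μ {ω | K ≤ N j ω}).toReal ≤ K * (1/c) := by
        rw [mul_one_div]
        exact h.trans ((hNexp j).trans_eq hKc)
      exact (mul_le_mul_iff_of_pos_left hK0).mp h2
    have hC : μ {ω | K ≤ N j ω} ≤ ENNReal.ofReal (1/c) := by
      rw [ENNReal.le_ofReal_iff_toReal_le (measure_ne_top μ _) (by positivity)]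
      exact hmarkov
    have hAeq : A j = {ω | (G_i + N j ω) * (1 - ε_US) ≤ X j ω ∧
        X j ω ≤ (G_i + N j ω) * (1 + ε_US)} \ {ω | K ≤ N j ω} := by
      ext ω
      rw [hAmem j ω]
      simp only [Set.mem_diff, Set.mem_setOf_eq, not_le]
    rw [hAeq]
    calc ENNReal.ofReal p = ENNReal.ofReal (1 - δ_US) - ENNReal.ofReal (1/c) := by
          rw [← ENNReal.ofReal_sub _ (by positivity), hp]
    _ ≤ μ _ - μ {ω | K ≤ N j ω} := tsub_le_tsub (hX j) hC
    _ ≤ μ _ := le_measure_diff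
  have hq : ∀ j, p ≤ (μ (A j)).toReal :=
    fun j => (ENNReal.ofReal_le_iff_le_toReal (measure_ne_top μ _)).mp (hμA j)
  -- mgf of indicator
  have hexpY : ∀ j, (fun ω => exp (t * Y j ω)) = fun ω => 1 + (exp t - 1) * Y j ω := by
    intro j
    funext ω
    by_cases h : ω ∈ A j <;> simp [hY, Set.indicator_apply, h]
  have hYind_int : ∀ j, Integrable (Y j) μ := by
    intro j
    simpa [hY] using (integrable_const (1:ℝ)).indicator (hAm j)
  have hYint : ∀ j, Integrable (fun ω => exp (t * Y j ω)) μ := by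
    intro j
    rw [hexpY j]
    exact (integrable_const _).add ((hYind_int j).const_mul _)
  have hmgf : ∀ j, mgf (Y j) μ t = 1 + (exp t - 1) * (μ (A j)).toReal := by
    intro j
    rw [mgf, hexpY j]
    rw [integral_add (integrable_const _) ((hYind_int j).const_mul _)]
    rw [integral_const, integral_const_mul]
    have hint : ∫ ω, Y j ω ∂μ = (μ (A j)).toReal := by
      simp only [hY]
      rw [integral_indicator_const _ (hAm j)]
      simp [measureReal_def]
    rw [hint]
    simp
  have hexpt1 : exp t - 1 ≤ 0 := by
    have : exp t ≤ 1 := exp_le_one_iff.mpr ht0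
    linarith
  set D : ℝ := 1 + (exp t - 1) * p with hD
  have hD0 : 0 < D := by
    rw [hD]; nlinarith [exp_pos t, hexpt1]
  have hmgf_le : ∀ j, mgf (Y j) μ t ≤ D := by
    intro j
    rw [hmgf j, hD]
    nlinarith [hq j, hexpt1]
  -- Chernoff
  set S : Ω → ℝ := ∑ j : Fin r, Y j with hS
  have hSint : Integrable (fun ω => exp (t * S ω)) μ :=
    hYindep.integrable_exp_mul_sum hYm (fun j _ => hYint j)
  have hcher := measure_le_le_exp_mul_mgf (X := S) (μ := μ) (t := t) ((r:ℝ)/2) ht0 hSint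
  have hmgfS : mgf S μ t = ∏ j : Fin r, mgf (Y j) μ t := hYindep.mgf_sum hYm Finset.univ
  have hprod : ∏ j : Fin r, mgf (Y j) μ t ≤ D ^ r := by
    calc ∏ j : Fin r, mgf (Y j) μ t ≤ ∏ _j : Fin r, D :=
      Finset.prod_le_prod (fun j _ => mgf_nonneg) (fun j _ => hmgf_le j)
    _ = D ^ r := by simp
  have hbound : (μ {ω | S ω ≤ (r:ℝ)/2}).toReal ≤ exp (-2 * r * (p - 1/2)^2) := by
    have h1 : (μ {ω | S ω ≤ (r:ℝ)/2}).toReal ≤ exp (-t * ((r:ℝ)/2)) * D ^ r := by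
      calc (μ {ω | S ω ≤ (r:ℝ)/2}).toReal ≤ exp (-t * ((r:ℝ)/2)) * mgf S μ t := hcher
      _ ≤ exp (-t * ((r:ℝ)/2)) * D ^ r := by
          rw [hmgfS]
          exact mul_le_mul_of_nonneg_left hprod (exp_pos _).le
    have h2 : exp (-t * ((r:ℝ)/2)) * D ^ r = (exp (2*s) * D) ^ r := by
      rw [mul_pow, ← exp_nat_mul]
      congr 1
      rw [htdef]; ring
    have h3 : exp (2*s) * D ≤ exp (-(2*s^2)) := by
      have hG := hoeffG s hs0.le
      have he : exp (2*s) * exp t = exp (-(2*s)) := by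
        rw [← exp_add, htdef]; congr 1; ring
      have hDeq : exp (2*s) * D = (1/2 - s) * exp (2*s) + (1/2 + s) * exp (-(2*s)) := by
        rw [hD, hpe]
        linear_combination ((1/2:ℝ) + s) * he
      have h5 : exp (-(2*s^2)) = 1 / exp (2*s^2) := by rw [exp_neg, one_div]
      rw [hDeq, h5, le_div_iff₀ (exp_pos _)]
      exact hG
    have h4 : (exp (-(2*s^2))) ^ r = exp (-2 * r * (p-1/2)^2) := by
      rw [← exp_nat_mul]
      congr 1
      rw [hsdef]; ring
    calc (μ {ω | S ω ≤ (r:ℝ)/2}).toReal ≤ (exp (2*s) * D) ^ r := by rw [← h2]; exact h1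
    _ ≤ (exp (-(2*s^2))) ^ r := pow_le_pow_left₀ (by positivity) h3 r
    _ = exp (-2 * r * (p-1/2)^2) := h4
  -- event inclusion
  set E : Set Ω := {ω | S ω ≤ (r:ℝ)/2} with hE
  have hSm : Measurable S := by
    have heq : S = fun a => ∑ j : Fin r, Y j a := funext fun a => by rw [hS, Finset.sum_apply]
    rw [heq]; exact Finset.measurable_sum _ (fun j _ => hYm j)
  have hEm : MeasurableSet E := measurableSet_le hSm measurable_const
  have hincl : Eᶜ ∩ {ω | ∀ j, 0 ≤ N j ω} ⊆
      {ω | G_i * (1 - ε_US) ≤ sortedMedian hr (fun j => X j ω) ∧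
           sortedMedian hr (fun j => X j ω) ≤ G_i * (1 + ε_US) + ε * G_S} := by
    rintro ω ⟨hωE, hωN⟩
    simp only [hE, Set.mem_compl_iff, Set.mem_setOf_eq, not_le] at hωE
    set Aω : Finset (Fin r) := Finset.univ.filter (fun j => ω ∈ A j) with hAω
    have hScard : S ω = (Aω.card : ℝ) := by
      have step1 : S ω = ∑ j : Fin r, (if ω ∈ A j then (1:ℝ) else 0) := by
        rw [hS, Finset.sum_apply]
        exact Finset.sum_congr rfl (fun j _ => by simp [hY, Set.indicator_apply])
      rw [step1, hAω, Finset.sum_boole]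
    have hcard : r < 2 * Aω.card := by
      have hlt : (r:ℝ) < 2 * (Aω.card : ℝ) := by rw [← hScard]; linarith
      exact_mod_cast hlt
    apply median_bounds hr _ _ _ Aω hcard
    intro j hj
    have hωA : ω ∈ A j := (Finset.mem_filter.mp hj).2
    rw [hAmem j ω] at hωA
    obtain ⟨⟨h1, h2⟩, h3⟩ := hωA
    have hN0 := hωN j
    constructor
    · nlinarith
    · nlinarith [hKε]
  -- final assembly
  have hfull : μ ({ω | ∀ j, 0 ≤ N j ω}ᶜ) = 0 := by
    have hN0ae : ∀ᵐ ω ∂μ, ∀ j, 0 ≤ N j ω := (ae_all_iff).mpr hNnonneg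
    rw [Set.compl_setOf]
    exact ae_iff.mp hN0ae
  calc ENNReal.ofReal (1 - Real.exp (-2 * r * (p - 1 / 2) ^ 2))
      = 1 - ENNReal.ofReal (Real.exp (-2 * r * (p - 1/2)^2)) := by
        rw [ENNReal.ofReal_sub _ (exp_pos _).le, ENNReal.ofReal_one]
    _ ≤ 1 - μ E := by
        apply tsub_le_tsub_left
        rw [ENNReal.le_ofReal_iff_toReal_le (measure_ne_top μ _) (exp_pos _).le]
        exact hbound
    _ = μ Eᶜ := (prob_compl_eq_one_sub hEm).symm
    _ = μ (Eᶜ ∩ {ω | ∀ j, 0 ≤ N j ω}) := (measure_inter_conull hfull).symm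
    _ ≤ μ _ := measure_mono hincl
end

section
/- Under the same hypotheses as Hydra's Theorem 2 — probability space (Ω, μ); r ≥ 1; reals ε_US ∈ (0,1), ε > 0, δ_US ≥ 0, c > 0 with p := 1 − δ_US − 1/c > 1/2; G_i ≥ 0, G_S > 0; w = c(1 + ε_US)/ε; mutually independent pairs (N_j, X_j) with N_j ≥ 0 a.e., E[N_j] ≤ G_S/w, and μ{(G_i + N_j)(1 − ε_US) ≤ X_j ≤ (G_i + N_j)(1 + ε_US)} ≥ 1 − δ_US for each j — if in addition δ ∈ (0,1) and r ≥ ln(1/δ) / (2 (p − 1/2)²), then the median estimate Ĝ_i of (X_1, …, X_r) satisfies μ{G_i(1 − ε_US) ≤ Ĝ_i ≤ G_i(1 + ε_US) + ε · G_S} ≥ 1 − δ. -/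
open MeasureTheory ProbabilityTheory

lemma sortedMedian_mem_Icc {r : ℕ} (hr : 0 < r) (x : Fin r → ℝ) (L U : ℝ)
    (h : r < 2 * (Finset.univ.filter (fun j => x j ∈ Set.Icc L U)).card) :
    sortedMedian hr x ∈ Set.Icc L U := by
  classical
  set σ := Tuple.sort x with hσ
  set k : Fin r := ⟨r / 2, Nat.div_lt_self hr one_lt_two⟩ with hk
  have hmono : Monotone (x ∘ σ) := Tuple.monotone_sort x
  set S : Finset (Fin r) := Finset.univ.filter (fun i => x (σ i) ∈ Set.Icc L U) with hS
  have hcard : S.card = (Finset.univ.filter (fun j => x j ∈ Set.Icc L U)).card := by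
    apply Finset.card_bij (fun i _ => σ i)
    · intro a ha; simp only [hS, Finset.mem_filter, Finset.mem_univ, true_and] at ha ⊢; exact ha
    · intro a _ b _ hab; exact σ.injective hab
    · intro b hb
      refine ⟨σ.symm b, ?_, by simp⟩
      simp only [hS, Finset.mem_filter, Finset.mem_univ, true_and, Equiv.apply_symm_apply]
      simpa using hb
  have hSk : (k : ℕ) < S.card := by
    have : (k : ℕ) = r / 2 := rfl
    omega
  -- upper bound: some i in S with k ≤ i
  obtain ⟨i₂, hi₂S, hi₂⟩ : ∃ i ∈ S, k ≤ i := by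
    by_contra hcon
    push_neg at hcon
    have hsub : S ⊆ Finset.Iio k := fun i hi => Finset.mem_Iio.mpr (hcon i hi)
    have := Finset.card_le_card hsub
    rw [Fin.card_Iio] at this
    omega
  obtain ⟨i₁, hi₁S, hi₁⟩ : ∃ i ∈ S, i ≤ k := by
    by_contra hcon
    push_neg at hcon
    have hsub : S ⊆ Finset.Ioi k := fun i hi => Finset.mem_Ioi.mpr (hcon i hi)
    have h2 := Finset.card_le_card hsub
    rw [Fin.card_Ioi] at h2
    have : (k : ℕ) = r / 2 := rfl
    omega
  simp only [hS, Finset.mem_filter, Finset.mem_univ, true_and, Set.mem_Icc] at hi₁S hi₂S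
  have hle1 : x (σ i₁) ≤ x (σ k) := hmono hi₁
  have hle2 : x (σ k) ≤ x (σ i₂) := hmono hi₂
  exact ⟨le_trans hi₁S.1 hle1, le_trans hle2 hi₂S.2⟩

lemma bernoulli_chernoff {Ω : Type*} [MeasurableSpace Ω] (μ : Measure Ω)
    [IsProbabilityMeasure μ] (r : ℕ) (B : Fin r → Ω → ℝ)
    (hmeas : ∀ j, Measurable (B j))
    (hind : iIndepFun B μ)
    (h01 : ∀ j ω, B j ω = 0 ∨ B j ω = 1)
    (q : ℝ) (hq0 : 0 < q) (hqh : q < 1 / 2)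
    (hqj : ∀ j, (μ {ω | B j ω = 1}).toReal ≤ q) :
    (μ {ω | (r : ℝ) / 2 ≤ ∑ j, B j ω}).toReal ≤
      Real.exp (-(2 * r * (1 / 2 - q) ^ 2)) := by
  classical
  have hq1 : q < 1 := hqh.trans (by norm_num)
  set t : ℝ := Real.log ((1 - q) / q) with ht_def
  have hfrac1 : (1 : ℝ) ≤ (1 - q) / q := by
    rw [le_div_iff₀ hq0]; linarith
  have ht0 : 0 ≤ t := Real.log_nonneg hfrac1
  have hexpt : Real.exp t = (1 - q) / q := Real.exp_log (by apply div_pos <;> linarith)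
  -- pointwise identity
  have hpt : ∀ j ω, Real.exp (t * B j ω) = 1 + (Real.exp t - 1) * B j ω := by
    intro j ω
    rcases h01 j ω with h | h <;> simp [h]
  -- integrability of B j
  have hBint : ∀ j, Integrable (B j) μ := by
    intro j
    refine (integrable_const (1 : ℝ)).mono' (hmeas j).aestronglyMeasurable ?_
    exact ae_of_all _ fun ω => by rcases h01 j ω with h | h <;> simp [h]
  have hint : ∀ j, Integrable (fun ω => Real.exp (t * B j ω)) μ := by
    intro j
    have : (fun ω => Real.exp (t * B j ω)) = fun ω => 1 + (Real.exp t - 1) * B j ω := by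
      funext ω; exact hpt j ω
    rw [this]
    exact (integrable_const 1).add ((hBint j).const_mul _)
  -- integral of B j
  have hBval : ∀ j, ∫ ω, B j ω ∂μ = (μ {ω | B j ω = 1}).toReal := by
    intro j
    have hset : MeasurableSet {ω | B j ω = 1} := (hmeas j) (measurableSet_singleton 1)
    have : B j = Set.indicator {ω | B j ω = 1} (fun _ => (1 : ℝ)) := by
      funext ω
      rcases h01 j ω with h | h
      · rw [h, Set.indicator_of_notMem]; simp [h]
      · rw [h, Set.indicator_of_mem]; exact h
    rw [this, integral_indicator_const _ hset]
    simp [measureReal_def]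
  -- mgf bound per row
  have hmgf : ∀ j, mgf (B j) μ t ≤ 2 * (1 - q) := by
    intro j
    rw [mgf]
    have : ∫ ω, Real.exp (t * B j ω) ∂μ = 1 + (Real.exp t - 1) * ∫ ω, B j ω ∂μ := by
      calc ∫ ω, Real.exp (t * B j ω) ∂μ = ∫ ω, (1 + (Real.exp t - 1) * B j ω) ∂μ := by
            congr 1; funext ω; exact hpt j ω
        _ = 1 + (Real.exp t - 1) * ∫ ω, B j ω ∂μ := by
            rw [integral_add (integrable_const 1) ((hBint j).const_mul _)]
            rw [integral_const_mul]; simp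
    rw [this, hBval j]
    have h1 : Real.exp t - 1 ≥ 0 := by
      have := Real.one_le_exp ht0; linarith
    have h2 : (Real.exp t - 1) * (μ {ω | B j ω = 1}).toReal ≤ (Real.exp t - 1) * q :=
      mul_le_mul_of_nonneg_left (hqj j) h1
    have h3 : (Real.exp t - 1) * q = 1 - 2 * q := by
      rw [hexpt]; field_simp; ring
    nlinarith [h2, h3]
  -- Chernoff
  have hS : (μ {ω | (r : ℝ) / 2 ≤ (∑ j, B j) ω}).toReal ≤
      Real.exp (-t * ((r : ℝ) / 2)) * mgf (∑ j, B j) μ t := by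
    apply measure_ge_le_exp_mul_mgf _ ht0
    exact iIndepFun.integrable_exp_mul_sum hind hmeas (fun i _ => hint i)
  have hsum_apply : ∀ ω, (∑ j, B j) ω = ∑ j, B j ω := fun ω => Finset.sum_apply ω _ _
  have hmgfsum : mgf (∑ j, B j) μ t = ∏ j, mgf (B j) μ t :=
    iIndepFun.mgf_sum hind hmeas Finset.univ
  have hprod : ∏ j : Fin r, mgf (B j) μ t ≤ (2 * (1 - q)) ^ r := by
    calc ∏ j : Fin r, mgf (B j) μ t ≤ ∏ _j : Fin r, (2 * (1 - q)) :=
          Finset.prod_le_prod (fun j _ => mgf_nonneg) (fun j _ => hmgf j)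
      _ = (2 * (1 - q)) ^ r := by rw [Finset.prod_const, Finset.card_univ, Fintype.card_fin]
  have hfinal : Real.exp (-t * ((r : ℝ) / 2)) * (2 * (1 - q)) ^ r ≤
      Real.exp (-(2 * r * (1 / 2 - q) ^ 2)) := by
    have h2q : (0 : ℝ) < 2 * (1 - q) := by linarith
    have hpow : (2 * (1 - q)) ^ r = Real.exp (r * Real.log (2 * (1 - q))) := by
      rw [← Real.log_pow, Real.exp_log (pow_pos h2q r)]
    rw [hpow, ← Real.exp_add]
    apply Real.exp_le_exp.mpr
    -- -t*r/2 + r*log(2(1-q)) ≤ -(2 r u²)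
    have hkey : Real.log (4 * (q * (1 - q))) ≤ -(4 * (1 / 2 - q) ^ 2) := by
      have hpos : (0 : ℝ) < 4 * (q * (1 - q)) := by nlinarith
      rw [Real.log_le_iff_le_exp hpos]
      have h4 : 4 * (q * (1 - q)) = 1 + -(4 * (1 / 2 - q) ^ 2) := by ring
      rw [h4]
      exact Real.add_one_le_exp _ |>.trans_eq rfl |> fun h => by linarith [Real.add_one_le_exp (-(4 * (1 / 2 - q) ^ 2))]
    have hlog : Real.log (2 * (1 - q)) - t / 2 = Real.log (4 * (q * (1 - q))) / 2 := by
      rw [ht_def, Real.log_div (by linarith) (ne_of_gt hq0)]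
      have : Real.log (4 * (q * (1 - q))) = Real.log 4 + (Real.log q + Real.log (1 - q)) := by
        rw [Real.log_mul (by norm_num) (by nlinarith), Real.log_mul (ne_of_gt hq0) (by linarith)]
      rw [this]
      have h2 : Real.log (2 * (1 - q)) = Real.log 2 + Real.log (1 - q) := by
        rw [Real.log_mul (by norm_num) (by linarith)]
      have h4 : Real.log 4 = 2 * Real.log 2 := by
        rw [show (4 : ℝ) = 2 ^ 2 by norm_num, Real.log_pow]; push_cast; ring
      rw [h2, h4]; ring
    have : -t * ((r : ℝ) / 2) + r * Real.log (2 * (1 - q))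
        = r * (Real.log (2 * (1 - q)) - t / 2) := by ring
    rw [this, hlog]
    have hr0 : (0 : ℝ) ≤ r := Nat.cast_nonneg r
    calc (r : ℝ) * (Real.log (4 * (q * (1 - q))) / 2)
        ≤ (r : ℝ) * (-(4 * (1 / 2 - q) ^ 2) / 2) := by
          apply mul_le_mul_of_nonneg_left _ hr0
          linarith
      _ = -(2 * r * (1 / 2 - q) ^ 2) := by ring
  calc (μ {ω | (r : ℝ) / 2 ≤ ∑ j, B j ω}).toReal
      = (μ {ω | (r : ℝ) / 2 ≤ (∑ j, B j) ω}).toReal := by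
        have hset : {ω | (r : ℝ) / 2 ≤ ∑ j, B j ω} = {ω | (r : ℝ) / 2 ≤ (∑ j, B j) ω} := by
          ext ω; simp [hsum_apply]
        rw [hset]
    _ ≤ Real.exp (-t * ((r : ℝ) / 2)) * mgf (∑ j, B j) μ t := hS
    _ = Real.exp (-t * ((r : ℝ) / 2)) * ∏ j, mgf (B j) μ t := by rw [hmgfsum]
    _ ≤ Real.exp (-t * ((r : ℝ) / 2)) * (2 * (1 - q)) ^ r := by
        apply mul_le_mul_of_nonneg_left hprod (Real.exp_nonneg _)
    _ ≤ Real.exp (-(2 * r * (1 / 2 - q) ^ 2)) := hfinal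

/-- Hydra's Theorem 2 (accuracy guarantee of the Hydra-sketch): with `r` rows of
width `w = c(1 + ε_US)/ε`, mutually independent per-row pairs `(N_j, X_j)` of
collision noise and universal-sketch estimate, `N_j ≥ 0` a.e. with
`E[N_j] ≤ G_S / w`, and each `X_j` approximating `G_i + N_j` within a
`(1 ± ε_US)` factor with probability at least `1 − δ_US`, the median `Ĝ_i` of the
per-row estimates satisfies `G_i(1 − ε_US) ≤ Ĝ_i ≤ G_i(1 + ε_US) + ε·G_S` with
probability at least `1 − exp(−2 r (p − 1/2)²)` where `p = 1 − δ_US − 1/c`. -/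
theorem hydra_theorem2_rows {Ω : Type*} [MeasurableSpace Ω] (μ : Measure Ω)
    [IsProbabilityMeasure μ]
    (r : ℕ) (hr : 0 < r)
    (ε_US ε δ_US c p G_i G_S w : ℝ)
    (hε_US : ε_US ∈ Set.Ioo (0 : ℝ) 1) (hε : 0 < ε) (hδ_US : 0 ≤ δ_US) (hc : 0 < c)
    (hp : p = 1 - δ_US - 1 / c) (hp2 : 1 / 2 < p)
    (hGi : 0 ≤ G_i) (hGS : 0 < G_S) (hw : w = c * (1 + ε_US) / ε)
    (N X : Fin r → Ω → ℝ)
    (hNm : ∀ j, Measurable (N j)) (hXm : ∀ j, Measurable (X j))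
    (hindep : iIndepFun
      (fun j ω => (N j ω, X j ω)) μ)
    (hNnonneg : ∀ j, ∀ᵐ ω ∂μ, 0 ≤ N j ω)
    (hNint : ∀ j, Integrable (N j) μ)
    (hNexp : ∀ j, ∫ ω, N j ω ∂μ ≤ G_S / w)
    (hX : ∀ j, ENNReal.ofReal (1 - δ_US) ≤
      μ {ω | (G_i + N j ω) * (1 - ε_US) ≤ X j ω ∧ X j ω ≤ (G_i + N j ω) * (1 + ε_US)})
    (δ : ℝ) (hδ : δ ∈ Set.Ioo (0 : ℝ) 1)
    (hrδ : Real.log (1 / δ) / (2 * (p - 1 / 2) ^ 2) ≤ (r : ℝ)) :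
    ENNReal.ofReal (1 - δ) ≤
      μ {ω | G_i * (1 - ε_US) ≤ sortedMedian hr (fun j => X j ω) ∧
             sortedMedian hr (fun j => X j ω) ≤ G_i * (1 + ε_US) + ε * G_S} := by
  classical
  obtain ⟨hε1, hε2⟩ := hε_US
  obtain ⟨hδ1, hδ2⟩ := hδ
  set L : ℝ := G_i * (1 - ε_US) with hLdef
  set U : ℝ := G_i * (1 + ε_US) + ε * G_S with hUdef
  have hwpos : 0 < w := by rw [hw]; positivity
  set M : ℝ := c * G_S / w with hMdef
  have hMpos : 0 < M := by rw [hMdef]; positivity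
  have hMU : (G_i + M) * (1 + ε_US) = U := by
    rw [hUdef, hMdef, hw]
    field_simp
  set q : ℝ := δ_US + 1 / c with hqdef
  have hq0 : 0 < q := by
    have : 0 < 1 / c := by positivity
    rw [hqdef]; linarith
  have hqh : q < 1 / 2 := by
    rw [hqdef]; rw [hp] at hp2; linarith
  have hqp : 1 / 2 - q = p - 1 / 2 := by rw [hqdef, hp]; ring
  have h1c : 0 < 1 / c := by positivity
  have hδUS2 : δ_US < 1 / 2 := by rw [hp] at hp2; linarith
  -- Bernoulli indicators of the bad per-row events
  set B : Fin r → Ω → ℝ := fun j ω => if L ≤ X j ω ∧ X j ω ≤ U then 0 else 1 with hBdef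
  have hBmeas : ∀ j, Measurable (B j) := by
    intro j
    apply Measurable.ite _ measurable_const measurable_const
    exact (measurableSet_le measurable_const (hXm j)).inter
      (measurableSet_le (hXm j) measurable_const)
  have hB01 : ∀ j ω, B j ω = 0 ∨ B j ω = 1 := by
    intro j ω
    by_cases h : L ≤ X j ω ∧ X j ω ≤ U <;> simp [hBdef, h]
  have hBindep : iIndepFun B μ := by
    have : B = fun j => (fun z : ℝ × ℝ => if L ≤ z.2 ∧ z.2 ≤ U then (0:ℝ) else 1) ∘
        (fun ω => (N j ω, X j ω)) := by
      funext j ω; rfl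
    rw [this]
    apply iIndepFun.comp hindep
    intro i
    apply Measurable.ite _ measurable_const measurable_const
    exact (measurableSet_le measurable_const measurable_snd).inter
      (measurableSet_le measurable_snd measurable_const)
  -- per-row bad probability bound
  have hqj : ∀ j, (μ {ω | B j ω = 1}).toReal ≤ q := by
    intro j
    have hBset : {ω | B j ω = 1} = {ω | L ≤ X j ω ∧ X j ω ≤ U}ᶜ := by
      ext ω
      simp only [Set.mem_setOf_eq, Set.mem_compl_iff]
      constructor
      · intro h1 hmem
        simp only [hBdef] at h1
        rw [if_pos hmem] at h1
        norm_num at h1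
      · intro h1
        simp only [hBdef]
        rw [if_neg h1]
    set Aset : Set Ω := {ω | (G_i + N j ω) * (1 - ε_US) ≤ X j ω ∧
        X j ω ≤ (G_i + N j ω) * (1 + ε_US)} with hAdef
    have hAm : MeasurableSet Aset :=
      (measurableSet_le (((hNm j).const_add G_i).mul_const _) (hXm j)).inter
        (measurableSet_le (hXm j) (((hNm j).const_add G_i).mul_const _))
    have hMset : MeasurableSet {ω | M ≤ N j ω} := measurableSet_le measurable_const (hNm j)
    -- a.e. inclusion
    have hsub : ∀ᵐ ω ∂μ, ω ∈ {ω | L ≤ X j ω ∧ X j ω ≤ U}ᶜ → ω ∈ Asetᶜ ∪ {ω | M ≤ N j ω} := by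
      filter_upwards [hNnonneg j] with ω hN0 hbad
      by_contra hcon
      simp only [Set.mem_union, Set.mem_compl_iff, not_or, not_not] at hcon
      obtain ⟨hA, hMN⟩ := hcon
      simp only [Set.mem_setOf_eq, not_lt] at hMN
      obtain ⟨h1, h2⟩ := hA
      apply hbad
      constructor
      · calc L = G_i * (1 - ε_US) := rfl
          _ ≤ (G_i + N j ω) * (1 - ε_US) := by nlinarith
          _ ≤ X j ω := h1
      · calc X j ω ≤ (G_i + N j ω) * (1 + ε_US) := h2
          _ ≤ (G_i + M) * (1 + ε_US) := by nlinarith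
          _ = U := hMU
    have hmono := measure_mono_ae hsub
    have hUnion : μ (Asetᶜ ∪ {ω | M ≤ N j ω}) ≤ μ Asetᶜ + μ {ω | M ≤ N j ω} :=
      measure_union_le _ _
    -- μ Asetᶜ ≤ ofReal δ_US
    have hA1 : (μ Asetᶜ).toReal ≤ δ_US := by
      have hcompl : μ Asetᶜ = 1 - μ Aset := prob_compl_eq_one_sub hAm
      have hge : ENNReal.ofReal (1 - δ_US) ≤ μ Aset := hX j
      have hle1 : μ Aset ≤ 1 := prob_le_one
      rw [hcompl]
      rw [ENNReal.toReal_sub_of_le hle1 (by simp)]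
      have : 1 - δ_US ≤ (μ Aset).toReal := by
        rw [← ENNReal.toReal_ofReal (by linarith : (0:ℝ) ≤ 1 - δ_US)]
        exact ENNReal.toReal_mono (measure_ne_top μ _) hge
      simp only [ENNReal.toReal_one]
      linarith
    -- Markov
    have hA2 : (μ {ω | M ≤ N j ω}).toReal ≤ 1 / c := by
      have hmark := mul_meas_ge_le_integral_of_nonneg (hNnonneg j) (hNint j) M
      have h2 : M * (μ {ω | M ≤ N j ω}).toReal ≤ G_S / w := le_trans hmark (hNexp j)
      have h3 : G_S / w = M / c := by rw [hMdef]; field_simp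
      rw [h3] at h2
      exact le_of_mul_le_mul_left (by rw [mul_one_div]; exact h2) hMpos
    -- combine
    rw [hBset]
    have hfin1 : μ Asetᶜ ≠ ⊤ := measure_ne_top μ _
    have hfin2 : μ {ω | M ≤ N j ω} ≠ ⊤ := measure_ne_top μ _
    have : (μ {ω | L ≤ X j ω ∧ X j ω ≤ U}ᶜ).toReal ≤ (μ Asetᶜ).toReal + (μ {ω | M ≤ N j ω}).toReal := by
      have h4 : μ {ω | L ≤ X j ω ∧ X j ω ≤ U}ᶜ ≤ μ Asetᶜ + μ {ω | M ≤ N j ω} :=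
        le_trans hmono hUnion
      have := ENNReal.toReal_mono (by simp [hfin1, hfin2, ENNReal.add_ne_top]) h4
      rwa [ENNReal.toReal_add hfin1 hfin2] at this
    rw [hqdef]
    linarith
  -- Chernoff bound
  have hchern := bernoulli_chernoff μ r B hBmeas hBindep hB01 q hq0 hqh hqj
  -- tail ≤ δ
  have hu2 : 0 < (p - 1 / 2) ^ 2 := pow_pos (by linarith) 2
  have htail : Real.exp (-(2 * r * (1 / 2 - q) ^ 2)) ≤ δ := by
    rw [hqp]
    have h1 : Real.log (1 / δ) ≤ 2 * (p - 1 / 2) ^ 2 * r := by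
      rw [div_le_iff₀ (by linarith)] at hrδ
      linarith
    have h2 : Real.log (1 / δ) = -Real.log δ := by
      rw [one_div, Real.log_inv]
    rw [h2] at h1
    calc Real.exp (-(2 * r * (p - 1 / 2) ^ 2)) ≤ Real.exp (Real.log δ) := by
          apply Real.exp_le_exp.mpr; linarith
      _ = δ := Real.exp_log hδ1
  -- the bad event
  set Bad : Set Ω := {ω | (r : ℝ) / 2 ≤ ∑ j, B j ω} with hBaddef
  have hBadm : MeasurableSet Bad := by
    apply measurableSet_le measurable_const
    exact Finset.measurable_sum _ (fun j _ => hBmeas j)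
  have hBadδ : μ Bad ≤ ENNReal.ofReal δ := by
    rw [← ENNReal.ofReal_toReal (measure_ne_top μ Bad)]
    exact ENNReal.ofReal_le_ofReal (le_trans hchern htail)
  -- complement of Bad is contained in the goal event
  have hsub2 : Badᶜ ⊆ {ω | G_i * (1 - ε_US) ≤ sortedMedian hr (fun j => X j ω) ∧
      sortedMedian hr (fun j => X j ω) ≤ G_i * (1 + ε_US) + ε * G_S} := by
    intro ω hω
    simp only [hBaddef, Set.mem_compl_iff, Set.mem_setOf_eq, not_le] at hω
    -- count good rows
    have hsum : ∑ j, B j ω =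
        ((Finset.univ.filter (fun j => X j ω ∉ Set.Icc L U)).card : ℝ) := by
      rw [← Finset.sum_boole]
      apply Finset.sum_congr rfl
      intro j _
      by_cases h : L ≤ X j ω ∧ X j ω ≤ U <;> simp [hBdef, h, Set.mem_Icc]
    have hcardsplit : (Finset.univ.filter (fun j => X j ω ∈ Set.Icc L U)).card +
        (Finset.univ.filter (fun j => X j ω ∉ Set.Icc L U)).card = r := by
      rw [Finset.card_filter_add_card_filter_not]
      simp
    have hn : 2 * (Finset.univ.filter (fun j => X j ω ∉ Set.Icc L U)).card < r := by
      rw [hsum] at hω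
      have h2 : ((2 * (Finset.univ.filter (fun j => X j ω ∉ Set.Icc L U)).card : ℕ) : ℝ) < (r : ℝ) := by
        push_cast
        linarith
      exact_mod_cast h2
    have hgood : r < 2 * (Finset.univ.filter (fun j => X j ω ∈ Set.Icc L U)).card := by omega
    have := sortedMedian_mem_Icc hr (fun j => X j ω) L U (by exact hgood)
    exact ⟨this.1, this.2⟩
  -- final computation
  calc ENNReal.ofReal (1 - δ)
      ≤ 1 - ENNReal.ofReal δ := by
        rw [← ENNReal.ofReal_one, ← ENNReal.ofReal_sub _ hδ1.le]
    _ ≤ 1 - μ Bad := tsub_le_tsub_left hBadδ 1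
    _ = μ Badᶜ := (prob_compl_eq_one_sub hBadm).symm
    _ ≤ _ := measure_mono hsub2
end
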